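/- Let μ be a measure on ℝ³, let Ω ⊆ ℝ³ be a measurable set, let T be a finite set, let (B_t)_{t∈T} be a family of measurable subsets of ℝ³, let m ∈ ℝ³, and let d > 0, R > 0, C_bb > 0, C_bp > 0 be real numbers and C_ov a natural number. Assume (i) d² ≤ C_bb · μ(B_t ∩ Ω) for every t ∈ T, (ii) for every x ∈ Ω, the number of t ∈ T with x ∈ B_t is at most C_ov, (iii) B_t ⊆ closedBall(m, R) for every t ∈ T, and (iv) μ(closedBall(x, r) ∩ Ω) ≤ C_bp · r² for all x ∈ ℝ³ and r ≥ 0. Then (#T) · d² ≤ C_bb · C_ov · C_bp · R². -/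

import Mathlib

open MeasureTheory

/-- Measure-theoretic counting step in the proof of Lemma 5.1 (Sparsity): the
number of equally-sized boxes satisfying the curvature and overlap conditions
that fit inside a ball of radius `R` is at most `C_bb C_ov C_bp R² / d²`. -/
theorem boxes_in_ball_counting {ι : Type*} (μ : Measure (EuclideanSpace ℝ (Fin 3)))
    (Ω : Set (EuclideanSpace ℝ (Fin 3))) (hΩ : MeasurableSet Ω)
    (T : Finset ι) (B : ι → Set (EuclideanSpace ℝ (Fin 3)))
    (hBmeas : ∀ t ∈ T, MeasurableSet (B t))
    (m : EuclideanSpace ℝ (Fin 3))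
    (d R C_bb C_bp : ℝ) (hd : 0 < d) (hR : 0 < R) (hCbb : 0 < C_bb) (hCbp : 0 < C_bp)
    (C_ov : ℕ)
    (hcurv : ∀ t ∈ T, ENNReal.ofReal (d ^ 2) ≤ ENNReal.ofReal C_bb * μ (B t ∩ Ω))
    (hov : ∀ x ∈ Ω, ({t | t ∈ T ∧ x ∈ B t}).ncard ≤ C_ov)
    (hsub : ∀ t ∈ T, B t ⊆ Metric.closedBall m R)
    (hball : ∀ (x : EuclideanSpace ℝ (Fin 3)) (r : ℝ), 0 ≤ r →
      μ (Metric.closedBall x r ∩ Ω) ≤ ENNReal.ofReal (C_bp * r ^ 2)) :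
    (T.card : ℝ) * d ^ 2 ≤ C_bb * C_ov * C_bp * R ^ 2 := by
  classical
  set S := Metric.closedBall m R ∩ Ω with hSdef
  have hAmeas : ∀ t ∈ T, MeasurableSet (B t ∩ Ω) := fun t ht => (hBmeas t ht).inter hΩ
  -- pointwise bound on sum of indicators
  have hpt : ∀ x, ∑ t ∈ T, (B t ∩ Ω).indicator (1 : EuclideanSpace ℝ (Fin 3) → ENNReal) x
      ≤ S.indicator (fun _ => (C_ov : ENNReal)) x := by
    intro x
    by_cases hx : x ∈ S
    · rw [Set.indicator_of_mem hx]
      have hxΩ : x ∈ Ω := hx.2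
      have hsum : ∑ t ∈ T, (B t ∩ Ω).indicator (1 : EuclideanSpace ℝ (Fin 3) → ENNReal) x
          = ((T.filter fun t => x ∈ B t ∩ Ω).card : ENNReal) := by
        rw [Finset.card_filter]
        push_cast
        refine Finset.sum_congr rfl fun t ht => ?_
        by_cases h : x ∈ B t ∩ Ω <;> simp [h]
      rw [hsum]
      have hle : (T.filter fun t => x ∈ B t ∩ Ω).card ≤ C_ov := by
        have h1 : (T.filter fun t => x ∈ B t ∩ Ω).card ≤ (T.filter fun t => x ∈ B t).card :=
          Finset.card_le_card (Finset.monotone_filter_right T (fun t _ h => h.1))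
        have h2 : ({t | t ∈ T ∧ x ∈ B t}).ncard = (T.filter fun t => x ∈ B t).card := by
          have : {t | t ∈ T ∧ x ∈ B t} = ↑(T.filter fun t => x ∈ B t) := by
            ext t; simp
          rw [this, Set.ncard_coe_finset]
        exact h1.trans (h2 ▸ hov x hxΩ)
      exact_mod_cast hle
    · have : ∀ t ∈ T, (B t ∩ Ω).indicator (1 : EuclideanSpace ℝ (Fin 3) → ENNReal) x = 0 := by
        intro t ht
        apply Set.indicator_of_notMem
        intro hxt
        exact hx ⟨hsub t ht hxt.1, hxt.2⟩
      rw [Finset.sum_congr rfl this]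
      simp
  have hsum_le : ∑ t ∈ T, μ (B t ∩ Ω) ≤ (C_ov : ENNReal) * μ S := by
    calc ∑ t ∈ T, μ (B t ∩ Ω)
        = ∑ t ∈ T, ∫⁻ x, (B t ∩ Ω).indicator (1 : EuclideanSpace ℝ (Fin 3) → ENNReal) x ∂μ := by
          refine Finset.sum_congr rfl fun t ht => ?_
          rw [lintegral_indicator_one (hAmeas t ht)]
      _ = ∫⁻ x, ∑ t ∈ T, (B t ∩ Ω).indicator (1 : EuclideanSpace ℝ (Fin 3) → ENNReal) x ∂μ := by
          rw [lintegral_finset_sum]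
          exact fun t ht => measurable_one.indicator (hAmeas t ht)
      _ ≤ ∫⁻ x, S.indicator (fun _ => (C_ov : ENNReal)) x ∂μ := lintegral_mono hpt
      _ = (C_ov : ENNReal) * μ S := by
          rw [lintegral_indicator_const (measurableSet_closedBall.inter hΩ)]
  have hSle : μ S ≤ ENNReal.ofReal (C_bp * R ^ 2) := hball m R hR.le
  have key : ENNReal.ofReal ((T.card : ℝ) * d ^ 2)
      ≤ ENNReal.ofReal (C_bb * C_ov * C_bp * R ^ 2) := by
    have h1 : ENNReal.ofReal ((T.card : ℝ) * d ^ 2)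
        = ∑ t ∈ T, ENNReal.ofReal (d ^ 2) := by
      rw [Finset.sum_const, ENNReal.ofReal_mul (by positivity), ENNReal.ofReal_natCast,
        nsmul_eq_mul]
    have h2 : ∑ t ∈ T, ENNReal.ofReal (d ^ 2)
        ≤ ENNReal.ofReal C_bb * ∑ t ∈ T, μ (B t ∩ Ω) := by
      rw [Finset.mul_sum]
      exact Finset.sum_le_sum hcurv
    have h3 : ENNReal.ofReal C_bb * ∑ t ∈ T, μ (B t ∩ Ω)
        ≤ ENNReal.ofReal C_bb * ((C_ov : ENNReal) * ENNReal.ofReal (C_bp * R ^ 2)) := by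
      gcongr
      exact hsum_le.trans (by gcongr)
    have h4 : ENNReal.ofReal C_bb * ((C_ov : ENNReal) * ENNReal.ofReal (C_bp * R ^ 2))
        = ENNReal.ofReal (C_bb * C_ov * C_bp * R ^ 2) := by
      rw [← ENNReal.ofReal_natCast, ← ENNReal.ofReal_mul (by positivity),
        ← ENNReal.ofReal_mul hCbb.le]
      ring_nf
    rw [h1, ← h4]
    exact h2.trans h3
  have := (ENNReal.ofReal_le_ofReal_iff (by positivity)).mp key
  linarith
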